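/- (Flanders) Let F be a field and M an a×b M_1-matrix with max-rank MaxR(M) = r, and suppose |F| > r. Then there exist invertible scalar matrices P ∈ GL_a(F) and Q ∈ GL_b(F) such that the (i,j) entry of PMQ is zero whenever i > r and j > r (i.e., PMQ has block form [[M_{11}, M_{12}], [M_{21}, 0]] with M_{11} of size r × r). -/

import Mathlib

open MvPolynomial

section Defs

variable {F : Type*} [Field F]

/-- A polynomial in the block variables `x_{i,j}` (`i ∈ Fin d`, `j ∈ Fin n`) is
multilinear exactly in the blocks of `S`: every monomial has degree 1 in each block
`i ∈ S` and degree 0 in each block `i ∉ S`. -/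
def IsMultilinearOn {d n : ℕ} (S : Finset (Fin d))
    (f : MvPolynomial (Fin d × Fin n) F) : Prop :=
  ∀ m ∈ f.support, ∀ i : Fin d,
    (∑ j : Fin n, m (i, j)) = if i ∈ S then 1 else 0

/-- A multilinear form: degree 1 in every block of variables. -/
def IsMultilinear {d n : ℕ} (f : MvPolynomial (Fin d × Fin n) F) : Prop :=
  IsMultilinearOn Finset.univ f

/-- Commutative rank: the rank of the matrix over the field of fractions of the
polynomial ring. -/
noncomputable def CR {σ : Type*} {α β : Type*} [Fintype β]
    (M : Matrix α β (MvPolynomial σ F)) : ℕ :=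
  (M.map (algebraMap (MvPolynomial σ F) (FractionRing (MvPolynomial σ F)))).rank

/-- `M` is the sum of `r` outer products `u ⊗ v`, where `u` has entries multilinear
in the blocks of some `S ⊆ [d]` and `v` has entries multilinear in the complementary
blocks. -/
def HasPRDecomp {d n a b : ℕ}
    (M : Matrix (Fin a) (Fin b) (MvPolynomial (Fin d × Fin n) F)) (r : ℕ) : Prop :=
  ∃ (S : Fin r → Finset (Fin d))
    (u : Fin r → Fin a → MvPolynomial (Fin d × Fin n) F)
    (v : Fin r → Fin b → MvPolynomial (Fin d × Fin n) F),
    (∀ t i, IsMultilinearOn (S t) (u t i)) ∧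
    (∀ t j, IsMultilinearOn (S t)ᶜ (v t j)) ∧
    M = ∑ t, Matrix.of fun i j => u t i * v t j

/-- Partition rank of a matrix of multilinear forms. -/
noncomputable def PR {d n a b : ℕ}
    (M : Matrix (Fin a) (Fin b) (MvPolynomial (Fin d × Fin n) F)) : ℕ :=
  sInf {r | HasPRDecomp M r}

/-- Evaluation of a matrix of multilinear forms at a point `p ∈ (F^n)^d`. -/
noncomputable def evalMat {d n : ℕ} {α β : Type*}
    (M : Matrix α β (MvPolynomial (Fin d × Fin n) F)) (p : Fin d → Fin n → F) :
    Matrix α β F :=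
  M.map (eval fun v => p v.1 v.2)

/-- Max-rank: the largest rank of a scalar evaluation. -/
noncomputable def MaxR {d n : ℕ} {α β : Type*} [Fintype β]
    (M : Matrix α β (MvPolynomial (Fin d × Fin n) F)) : ℕ :=
  ⨆ p : Fin d → Fin n → F, (evalMat M p).rank

/-- Partial evaluation: substitute `x_i := p_i` for `i ∈ S`, leaving the other
blocks of variables untouched. -/
noncomputable def pevalMat {d n : ℕ} {α β : Type*}
    (M : Matrix α β (MvPolynomial (Fin d × Fin n) F)) (S : Finset (Fin d))
    (p : Fin d → Fin n → F) :
    Matrix α β (MvPolynomial (Fin d × Fin n) F) :=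
  M.map (aeval fun v : Fin d × Fin n => if v.1 ∈ S then C (p v.1 v.2) else X v)

end Defs

section D1

variable {F : Type*} [Field F]

/-- Partition-rank decomposition for matrices of linear forms: a sum of `r` outer
products, each either (scalars) ⊗ (linear forms) or (linear forms) ⊗ (scalars). -/
def HasPR1Decomp {n a b : ℕ}
    (M : Matrix (Fin a) (Fin b) (MvPolynomial (Fin n) F)) (r : ℕ) : Prop :=
  ∃ (c : Fin r → Bool)
    (u : Fin r → Fin a → MvPolynomial (Fin n) F)
    (v : Fin r → Fin b → MvPolynomial (Fin n) F),
    (∀ t i, (u t i).IsHomogeneous (if c t then 0 else 1)) ∧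
    (∀ t j, (v t j).IsHomogeneous (if c t then 1 else 0)) ∧
    M = ∑ t, Matrix.of fun i j => u t i * v t j

/-- Partition rank of a matrix of linear forms. -/
noncomputable def PR1 {n a b : ℕ}
    (M : Matrix (Fin a) (Fin b) (MvPolynomial (Fin n) F)) : ℕ :=
  sInf {r | HasPR1Decomp M r}

/-- Max-rank of a matrix of linear forms. -/
noncomputable def MaxR1 {n a b : ℕ}
    (M : Matrix (Fin a) (Fin b) (MvPolynomial (Fin n) F)) : ℕ :=
  ⨆ p : Fin n → F, (M.map (eval p)).rank

end D1

section Tensor3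

variable {F : Type*} [Field F]

/-- Substitute the first two blocks of variables of a trilinear form at `x` and `y`,
leaving a polynomial in the third block. -/
noncomputable def sub01 {n : ℕ} (T : MvPolynomial (Fin 3 × Fin n) F)
    (x y : Fin n → F) : MvPolynomial (Fin 3 × Fin n) F :=
  aeval (fun v : Fin 3 × Fin n =>
    if v.1 = 0 then C (x v.2) else if v.1 = 1 then C (y v.2) else X v) T

open Classical in
/-- The bias of a 3-tensor: the probability over `(x, y)` that `T(x, y, -)` is the
zero linear form. -/
noncomputable def bias {n : ℕ} [Fintype F] (T : MvPolynomial (Fin 3 × Fin n) F) : ℝ :=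
  ((Finset.univ.filter fun p : (Fin n → F) × (Fin n → F) =>
      sub01 T p.1 p.2 = 0).card : ℝ) /
    ((Fintype.card ((Fin n → F) × (Fin n → F))) : ℝ)

/-- The analytic rank of a 3-tensor. -/
noncomputable def AR {n : ℕ} [Fintype F] (T : MvPolynomial (Fin 3 × Fin n) F) : ℝ :=
  - Real.logb (Fintype.card F) (bias T)

/-- A slice-rank decomposition: `T = ∑ f_t g_t` with `f_t` a linear form in one
block and `g_t` a bilinear form in the other two blocks. -/
def HasSRDecomp {n : ℕ} (T : MvPolynomial (Fin 3 × Fin n) F) (r : ℕ) : Prop :=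
  ∃ (c : Fin r → Fin 3) (f g : Fin r → MvPolynomial (Fin 3 × Fin n) F),
    (∀ t, IsMultilinearOn {c t} (f t)) ∧
    (∀ t, IsMultilinearOn ({c t} : Finset (Fin 3))ᶜ (g t)) ∧
    T = ∑ t, f t * g t

/-- Slice rank of a 3-tensor. -/
noncomputable def SR {n : ℕ} (T : MvPolynomial (Fin 3 × Fin n) F) : ℕ :=
  sInf {r | HasSRDecomp T r}

/-- The matrix `mat T` of a 3-tensor, evaluated at `x` in its first block:
the `(j,k)` entry is `T(x, e_j, e_k)`. -/
noncomputable def matT {n : ℕ} (T : MvPolynomial (Fin 3 × Fin n) F)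
    (x : Fin n → F) : Matrix (Fin n) (Fin n) F :=
  Matrix.of fun j k => eval (fun v : Fin 3 × Fin n =>
    if v.1 = 0 then x v.2
    else if v.1 = 1 then (if v.2 = j then 1 else 0)
    else (if v.2 = k then 1 else 0)) T

end Tensor3

section Mult

variable {F : Type*} [Field F]

/-- `mult(f, p)`: the minimum total degree of a monomial of `f(x + p)`. -/
noncomputable def polyMult {n : ℕ} (f : MvPolynomial (Fin n) F) (p : Fin n → F) : ℕ :=
  sInf {k | ∃ m ∈ (aeval (fun i : Fin n => X i + C (p i)) f :
    MvPolynomial (Fin n) F).support, (∑ i, m i) = k}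

end Mult

namespace FlandersAux

open Polynomial

variable {F : Type*} [Field F]


open Polynomial

variable {F : Type*} [Field F]

/-- A finitely supported ℕ-valued function with total sum 1 is a single. -/
lemma single_of_sum_eq_one {n : ℕ} (d : Fin n →₀ ℕ)
    (hd : (∑ i ∈ d.support, d i) = 1) : ∃ i₀, d = Finsupp.single i₀ 1 := by
  classical
  have hne : d.support.Nonempty := by
    by_contra h
    rw [Finset.not_nonempty_iff_eq_empty] at h
    rw [h] at hd
    simp at hd
  obtain ⟨i₀, hi₀⟩ := hne
  have h1 : d i₀ ≠ 0 := Finsupp.mem_support_iff.mp hi₀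
  have hsplit : ∑ i ∈ d.support \ {i₀}, d i + d i₀ = 1 := by
    rw [Finset.sum_eq_sum_sdiff_singleton_add hi₀] at hd
    exact hd
  have hz : ∑ i ∈ d.support \ {i₀}, d i = 0 := by omega
  have hi₀1 : d i₀ = 1 := by omega
  refine ⟨i₀, ?_⟩
  ext i
  rcases eq_or_ne i i₀ with rfl | hii
  · simp [hi₀1]
  · have : d i = 0 := by
      by_contra hdi
      have hmem : i ∈ d.support \ {i₀} := by
        simp [Finsupp.mem_support_iff, hdi, hii]
      have := Finset.sum_eq_zero_iff.mp hz i hmem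
      exact hdi this
    simp [this, Finsupp.single_apply, Ne.symm hii]

lemma degree_one_support {n : ℕ} {f : MvPolynomial (Fin n) F} (hf : f.IsHomogeneous 1)
    {d : Fin n →₀ ℕ} (hd : d ∈ f.support) : ∃ i₀, d = Finsupp.single i₀ 1 := by
  have h := hf (MvPolynomial.mem_support_iff.mp hd)
  apply single_of_sum_eq_one
  simpa [Finsupp.weight_apply, Finsupp.sum] using h

lemma eval_linear {n : ℕ} (f : MvPolynomial (Fin n) F) (hf : f.IsHomogeneous 1)
    (x y : Fin n → F) (c : F) :
    eval (fun k => x k + c * y k) f = eval x f + c * eval y f := by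
  classical
  rw [eval_eq', eval_eq', eval_eq', Finset.mul_sum, ← Finset.sum_add_distrib]
  refine Finset.sum_congr rfl fun d hd => ?_
  obtain ⟨i₀, rfl⟩ := degree_one_support hf hd
  have hprod : ∀ z : Fin n → F, (∏ i, z i ^ (Finsupp.single i₀ 1) i) = z i₀ := by
    intro z
    rw [Finset.prod_eq_single i₀]
    · simp
    · intro i _ hi; simp [Finsupp.single_apply, Ne.symm hi]
    · simp
  rw [hprod, hprod, hprod]
  ring

lemma linear_eq_zero {n : ℕ} (f : MvPolynomial (Fin n) F) (hf : f.IsHomogeneous 1)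
    (h : ∀ p : Fin n → F, eval p f = 0) : f = 0 := by
  classical
  ext d
  rw [MvPolynomial.coeff_zero]
  by_contra hd
  have hds : d ∈ f.support := MvPolynomial.mem_support_iff.mpr hd
  obtain ⟨i₀, rfl⟩ := degree_one_support hf hds
  have heval := h (Pi.single i₀ 1)
  rw [eval_eq'] at heval
  have : ∑ d' ∈ f.support, (coeff d' f * ∏ i, (Pi.single i₀ 1 : Fin n → F) i ^ d' i)
      = coeff (Finsupp.single i₀ 1) f := by
    rw [Finset.sum_eq_single (Finsupp.single i₀ 1)]
    · have : (∏ i, (Pi.single i₀ 1 : Fin n → F) i ^ (Finsupp.single i₀ 1) i) = 1 := by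
        rw [Finset.prod_eq_single i₀]
        · simp
        · intro i _ hi; simp [Finsupp.single_apply, Ne.symm hi]
        · simp
      rw [this, mul_one]
    · intro d' hd' hne
      obtain ⟨i₁, rfl⟩ := degree_one_support hf hd'
      have hi₁ : i₁ ≠ i₀ := by
        rintro rfl; exact hne rfl
      have : (∏ i, (Pi.single i₀ 1 : Fin n → F) i ^ (Finsupp.single i₁ 1) i) = 0 := by
        apply Finset.prod_eq_zero (Finset.mem_univ i₁)
        simp [Pi.single_apply, hi₁]
      rw [this, mul_zero]
    · intro h'; exact absurd hds h'
  rw [this] at heval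
  exact hd heval

/-- natDegree of a product of linear polynomials. -/
lemma natDegree_linprod_le {ι : Type*} (s : Finset ι) (u v : ι → F) :
    (∏ i ∈ s, (Polynomial.C (u i) + Polynomial.X * Polynomial.C (v i))).natDegree ≤ s.card := by
  refine (Polynomial.natDegree_prod_le s _).trans ?_
  calc ∑ i ∈ s, (Polynomial.C (u i) + Polynomial.X * Polynomial.C (v i)).natDegree ≤ ∑ _i ∈ s, 1 := by
        refine Finset.sum_le_sum fun i _ => ?_
        refine (Polynomial.natDegree_add_le _ _).trans (max_le (by simp) ?_)
        refine (Polynomial.natDegree_mul_le).trans ?_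
        simp
    _ = s.card := by simp

lemma coeff_linprod {ι : Type*} (s : Finset ι) (u v : ι → F) :
    (∏ i ∈ s, (Polynomial.C (u i) + Polynomial.X * Polynomial.C (v i))).coeff s.card = ∏ i ∈ s, v i := by
  classical
  induction s using Finset.induction with
  | empty => simp
  | @insert a s ha ih =>
    rw [Finset.prod_insert ha, Finset.card_insert_of_notMem ha, Finset.prod_insert ha]
    rw [add_mul, Polynomial.coeff_add, Polynomial.coeff_C_mul, mul_assoc, Polynomial.coeff_X_mul, Polynomial.coeff_C_mul, ih]
    have : (∏ i ∈ s, (Polynomial.C (u i) + Polynomial.X * Polynomial.C (v i))).coeff (s.card + 1) = 0 := by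
      apply Polynomial.coeff_eq_zero_of_natDegree_lt
      exact lt_of_le_of_lt (natDegree_linprod_le s u v) (Nat.lt_succ_self _)
    rw [this, mul_zero, zero_add]

lemma natDegree_det_lin_le {m : ℕ} (A B : Matrix (Fin m) (Fin m) F) :
    (Matrix.det (Matrix.of fun i j => Polynomial.C (A i j) + Polynomial.X * Polynomial.C (B i j))).natDegree ≤ m := by
  rw [Matrix.det_apply']
  refine Polynomial.natDegree_sum_le_of_forall_le _ _ fun σ _ => ?_
  refine (Polynomial.natDegree_mul_le).trans ?_
  rw [Polynomial.natDegree_intCast, zero_add]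
  refine le_trans ?_ (le_of_eq (by simp : (Finset.univ : Finset (Fin m)).card = m))
  exact natDegree_linprod_le Finset.univ (fun i => A (σ i) i) (fun i => B (σ i) i)

lemma coeff_det_lin {m : ℕ} (A B : Matrix (Fin m) (Fin m) F) :
    (Matrix.det (Matrix.of fun i j => Polynomial.C (A i j) + Polynomial.X * Polynomial.C (B i j))).coeff m = B.det := by
  rw [Matrix.det_apply', Matrix.det_apply', Polynomial.finset_sum_coeff]
  refine Finset.sum_congr rfl fun σ _ => ?_
  rw [show ((Equiv.Perm.sign σ : ℤ) : F[X]) = Polynomial.C ((Equiv.Perm.sign σ : ℤ) : F) by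
    rw [Polynomial.C_eq_intCast]]
  rw [Polynomial.coeff_C_mul]
  congr 1
  have := coeff_linprod (Finset.univ : Finset (Fin m)) (fun i => A (σ i) i) (fun i => B (σ i) i)
  simpa using this

/-- det of a submatrix of a low-rank matrix vanishes. -/
lemma det_submatrix_eq_zero {a b m r : ℕ} (V : Matrix (Fin a) (Fin b) F)
    (hV : V.rank ≤ r) (hrm : r < m) (ri : Fin m → Fin a) (ci : Fin m → Fin b) :
    (V.submatrix ri ci).det = 0 := by
  classical
  by_contra h
  have hunit : IsUnit (V.submatrix ri ci) :=
    (Matrix.isUnit_iff_isUnit_det _).mpr (isUnit_iff_ne_zero.mpr h)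
  have hrank : (V.submatrix ri ci).rank = m := by
    rw [Matrix.rank_of_isUnit _ hunit, Fintype.card_fin]
  have hsub : V.submatrix ri ci =
      (Matrix.of fun (t : Fin m) (k : Fin a) => if k = ri t then (1:F) else 0) * V *
      (Matrix.of fun (k : Fin b) (s : Fin m) => if k = ci s then (1:F) else 0) := by
    ext t s
    rw [Matrix.mul_apply]
    simp only [Matrix.mul_apply, Matrix.of_apply, ite_mul, one_mul, zero_mul,
      mul_ite, mul_one, mul_zero]
    simp [Finset.sum_ite_eq']
  have hle : (V.submatrix ri ci).rank ≤ r := by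
    rw [hsub]
    exact le_trans (le_trans (Matrix.rank_mul_le_left _ _) (Matrix.rank_mul_le_right _ _)) hV
  omega


open Module


variable {F : Type*} [Field F]

open Module

/-- Rank canonical form: any rank-`r` matrix is `P⁻¹ * E * Q⁻¹`. -/
lemma canon {a b r : ℕ} (A : Matrix (Fin a) (Fin b) F) (hA : A.rank = r) :
    ∃ (P : Matrix (Fin a) (Fin a) F) (Q : Matrix (Fin b) (Fin b) F),
      IsUnit P ∧ IsUnit Q ∧
      P * A * Q = Matrix.of (fun (i : Fin a) (j : Fin b) =>
        if (i : ℕ) = (j : ℕ) ∧ (i : ℕ) < r then (1 : F) else 0) := by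
  classical
  set f := A.mulVecLin with hfdef
  have hr_a : r ≤ a := hA ▸ A.rank_le_height
  have hr_b : r ≤ b := hA ▸ A.rank_le_width
  have hRng : finrank F (LinearMap.range f) = r := hA
  have hfinb : finrank F (Fin b → F) = b := by simp
  have hfina : finrank F (Fin a → F) = a := by simp
  have hK : finrank F (LinearMap.ker f) = b - r := by
    have h2 := LinearMap.finrank_range_add_finrank_ker f
    rw [hfinb, hRng] at h2
    omega
  obtain ⟨W, hWc⟩ := Submodule.exists_isCompl (LinearMap.ker f)
  have hW : finrank F W = r := by
    have h3 := Submodule.finrank_add_eq_of_isCompl hWc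
    rw [hK, hfinb] at h3
    omega
  let bW : Basis (Fin r) F W := finBasisOfFinrankEq F W hW
  let bK : Basis (Fin (b - r)) F (LinearMap.ker f) := finBasisOfFinrankEq F _ hK
  let eB : (Fin r ⊕ Fin (b - r)) ≃ Fin b := finSumFinEquiv.trans (finCongr (by omega))
  let bB : Basis (Fin b) F (Fin b → F) :=
    ((bW.prod bK).map (Submodule.prodEquivOfIsCompl _ _ hWc.symm)).reindex eB
  have hbB_lt : ∀ t : Fin r, bB (eB (Sum.inl t)) = (bW t : Fin b → F) := by
    intro t
    simp only [bB, Basis.reindex_apply, Equiv.symm_apply_apply, Basis.map_apply,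
      Basis.prod_apply]
    simp
  have hbB_ge : ∀ s : Fin (b - r), bB (eB (Sum.inr s)) = (bK s : Fin b → F) := by
    intro s
    simp only [bB, Basis.reindex_apply, Equiv.symm_apply_apply, Basis.map_apply,
      Basis.prod_apply]
    simp
  -- the range side
  let g : W →ₗ[F] LinearMap.range f :=
    f.restrict (fun x _ => LinearMap.mem_range_self f x)
  have hginj : Function.Injective g := by
    intro x y hxy
    have h1 : f (x : Fin b → F) = f (y : Fin b → F) := by
      have := congrArg (Subtype.val) hxy
      simpa [g, LinearMap.restrict_coe_apply] using this
    have h2 : ((x : Fin b → F) - (y : Fin b → F)) ∈ LinearMap.ker f := by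
      simp [LinearMap.mem_ker, map_sub, h1]
    have h3 : ((x : Fin b → F) - (y : Fin b → F)) ∈ W := sub_mem x.2 y.2
    have h4 := Submodule.disjoint_def.mp hWc.disjoint _ h2 h3
    exact Subtype.ext (by rwa [sub_eq_zero] at h4)
  have hgsurj : Function.Surjective g :=
    (LinearMap.injective_iff_surjective_of_finrank_eq_finrank (by rw [hW, hRng])).mp hginj
  let gE : W ≃ₗ[F] LinearMap.range f := LinearEquiv.ofBijective g ⟨hginj, hgsurj⟩
  obtain ⟨U, hUc⟩ := Submodule.exists_isCompl (LinearMap.range f)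
  have hU : finrank F U = a - r := by
    have h3 := Submodule.finrank_add_eq_of_isCompl hUc
    rw [hRng, hfina] at h3
    omega
  let bU : Basis (Fin (a - r)) F U := finBasisOfFinrankEq F U hU
  let eA : (Fin r ⊕ Fin (a - r)) ≃ Fin a := finSumFinEquiv.trans (finCongr (by omega))
  let bA : Basis (Fin a) F (Fin a → F) :=
    (((bW.map gE).prod bU).map (Submodule.prodEquivOfIsCompl _ _ hUc)).reindex eA
  have hbA_lt : ∀ t : Fin r, bA (eA (Sum.inl t)) = f (bW t : Fin b → F) := by
    intro t
    simp only [bA, Basis.reindex_apply, Equiv.symm_apply_apply, Basis.map_apply,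
      Basis.prod_apply]
    simp [gE, g, LinearMap.restrict_coe_apply]
    rfl
  -- matrices
  let R : Matrix (Fin a) (Fin a) F := (Pi.basisFun F (Fin a)).toMatrix bA
  let Q : Matrix (Fin b) (Fin b) F := (Pi.basisFun F (Fin b)).toMatrix bB
  have hRinv : Invertible R := (Pi.basisFun F (Fin a)).invertibleToMatrix bA
  have hQinv : Invertible Q := (Pi.basisFun F (Fin b)).invertibleToMatrix bB
  have hRapp : ∀ i k, R i k = bA k i := by
    intro i k
    simp [R, Basis.toMatrix_apply, Pi.basisFun_repr]
  have hQapp : ∀ k j, Q k j = bB j k := by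
    intro k j
    simp [Q, Basis.toMatrix_apply, Pi.basisFun_repr]
  refine ⟨⅟R, Q, isUnit_of_invertible _, isUnit_of_invertible _, ?_⟩
  have key : A * Q = R * Matrix.of (fun (i : Fin a) (j : Fin b) =>
      if (i : ℕ) = (j : ℕ) ∧ (i : ℕ) < r then (1 : F) else 0) := by
    ext i j
    have hcol : (A * Q) i j = f (bB j) i := by
      rw [Matrix.mul_apply]
      simp only [hQapp]
      rfl
    rw [hcol, Matrix.mul_apply]
    by_cases hj : (j : ℕ) < r
    · set t : Fin r := ⟨j, hj⟩ with ht
      have hej : eB (Sum.inl t) = j := by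
        apply Fin.ext
        simp [eB, ht]
      set kk : Fin a := ⟨(j : ℕ), lt_of_lt_of_le hj hr_a⟩ with hkk
      have hek : eA (Sum.inl t) = kk := by
        apply Fin.ext
        simp [eA, ht, hkk]
      have hlhs : f (bB j) i = bA kk i := by
        rw [← hej, hbB_lt t, ← hek, hbA_lt t]
      rw [hlhs]
      symm
      have hcond : ∀ k : Fin a, ((k : ℕ) = (j : ℕ) ∧ (k : ℕ) < r) ↔ k = kk := by
        intro k
        constructor
        · rintro ⟨h1, _⟩; apply Fin.ext; simp [hkk, h1]
        · rintro rfl; exact ⟨rfl, hj⟩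
      calc ∑ k, R i k * Matrix.of (fun (i : Fin a) (j : Fin b) =>
              if (i : ℕ) = (j : ℕ) ∧ (i : ℕ) < r then (1 : F) else 0) k j
          = ∑ k, if k = kk then R i k else 0 := by
            refine Finset.sum_congr rfl fun k _ => ?_
            simp only [Matrix.of_apply]
            by_cases h : k = kk
            · rw [if_pos ((hcond k).mpr h), if_pos h, mul_one]
            · rw [if_neg (fun hc => h ((hcond k).mp hc)), if_neg h, mul_zero]
        _ = R i kk := by rw [Finset.sum_ite_eq' Finset.univ kk (fun k => R i k)]; simp
        _ = bA kk i := hRapp i kk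
    · have hjs : (j : ℕ) - r < b - r := by omega
      set s : Fin (b - r) := ⟨(j : ℕ) - r, hjs⟩ with hs
      have hej : eB (Sum.inr s) = j := by
        apply Fin.ext
        simp [eB, hs]
        omega
      have hlhs : f (bB j) = 0 := by
        rw [← hej, hbB_ge s]
        exact (bK s).2
      rw [hlhs]
      symm
      have : ∀ k : Fin a, R i k * Matrix.of (fun (i : Fin a) (j : Fin b) =>
          if (i : ℕ) = (j : ℕ) ∧ (i : ℕ) < r then (1 : F) else 0) k j = 0 := by
        intro k
        have : ¬ ((k : ℕ) = (j : ℕ) ∧ (k : ℕ) < r) := by omega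
        simp [this]
      rw [Finset.sum_congr rfl fun k _ => this k, Finset.sum_const_zero]
      rfl
  rw [Matrix.mul_assoc, key, ← Matrix.mul_assoc, invOf_mul_self, Matrix.one_mul]


end FlandersAux

/-- Flanders: If `M` is a matrix of linear forms with
`MaxR(M) = r` and `|F| > r`, then there are invertible scalar matrices `P, Q`
such that `PMQ` vanishes in its bottom-right `(a − r) × (b − r)` block. -/
theorem statement_17 (F : Type*) [Field F] (n a b : ℕ) (hn : 1 ≤ n) (r : ℕ)
    (M : Matrix (Fin a) (Fin b) (MvPolynomial (Fin n) F))
    (hM : ∀ i j, (M i j).IsHomogeneous 1)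
    (hmax : MaxR1 M = r) (hF : (r : Cardinal) < Cardinal.mk F) :
    ∃ (P : Matrix (Fin a) (Fin a) F) (Q : Matrix (Fin b) (Fin b) F),
      IsUnit P ∧ IsUnit Q ∧
      ∀ (i : Fin a) (j : Fin b), r ≤ (i : ℕ) → r ≤ (j : ℕ) →
        (P.map (fun c => (MvPolynomial.C c : MvPolynomial (Fin n) F)) * M *
          Q.map (fun c => (MvPolynomial.C c : MvPolynomial (Fin n) F))) i j = 0 := by
  classical
  have hbdd : BddAbove (Set.range fun p : Fin n → F => (M.map (eval p)).rank) := by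
    refine ⟨b, ?_⟩
    rintro x ⟨p, rfl⟩
    exact Matrix.rank_le_width _
  have hle : ∀ p : Fin n → F, (M.map (eval p)).rank ≤ r := by
    intro p
    have h := le_ciSup hbdd p
    exact hmax ▸ h
  obtain ⟨p₀, hp₀⟩ : ∃ p₀ : Fin n → F, (M.map (eval p₀)).rank = r := by
    have hne : (Set.range fun p : Fin n → F => (M.map (eval p)).rank).Nonempty :=
      ⟨_, ⟨(fun _ => 0), rfl⟩⟩
    have hmem := Nat.sSup_mem hne hbdd
    have heq : sSup (Set.range fun p : Fin n → F => (M.map (eval p)).rank) = r := by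
      rw [← hmax]; rfl
    rw [heq] at hmem
    exact hmem
  obtain ⟨P, Q, hP, hQ, hPQ⟩ := FlandersAux.canon (M.map (eval p₀)) hp₀
  refine ⟨P, Q, hP, hQ, ?_⟩
  intro i j hi hj
  set E : Matrix (Fin a) (Fin b) F := Matrix.of (fun (i : Fin a) (j : Fin b) =>
    if (i : ℕ) = (j : ℕ) ∧ (i : ℕ) < r then (1 : F) else 0) with hE
  set N : Matrix (Fin a) (Fin b) (MvPolynomial (Fin n) F) :=
    P.map (fun c => (MvPolynomial.C c : MvPolynomial (Fin n) F)) * M *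
      Q.map (fun c => (MvPolynomial.C c : MvPolynomial (Fin n) F)) with hN
  have hPC : ∀ {α β : ℕ} (Z : Matrix (Fin α) (Fin β) F) (p : Fin n → F),
      (Z.map fun c => (MvPolynomial.C c : MvPolynomial (Fin n) F)).map (eval p) = Z := by
    intro α β Z p
    ext x y
    simp [Matrix.map_apply]
  have hev : ∀ p : Fin n → F, N.map (eval p) = P * (M.map (eval p)) * Q := by
    intro p
    rw [hN, Matrix.map_mul (f := eval p), Matrix.map_mul (f := eval p), hPC, hPC]
  have hNE : N.map (eval p₀) = E := by rw [hev, hPQ]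
  have hNhom : ∀ (i' : Fin a) (j' : Fin b), (N i' j').IsHomogeneous 1 := by
    intro i' j'
    rw [hN, Matrix.mul_apply]
    apply MvPolynomial.IsHomogeneous.sum
    intro k _
    have h1 : (((P.map fun c => (MvPolynomial.C c : MvPolynomial (Fin n) F)) * M) i' k
        ).IsHomogeneous 1 := by
      rw [Matrix.mul_apply]
      apply MvPolynomial.IsHomogeneous.sum
      intro l _
      have h2 := (MvPolynomial.isHomogeneous_C (Fin n) (P i' l)).mul (hM l k)
      simpa [Matrix.map_apply] using h2
    have h3 := h1.mul (MvPolynomial.isHomogeneous_C (Fin n) (Q k j'))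
    simpa [Matrix.map_apply] using h3
  have hzero : ∀ p : Fin n → F, eval p (N i j) = 0 := by
    intro p
    set Vp : Matrix (Fin a) (Fin b) F := N.map (eval p) with hVp
    have hrk : ∀ q : Fin n → F, (N.map (eval q)).rank ≤ r := by
      intro q
      rw [hev q]
      have h1 : (P * M.map (eval q) * Q).rank = (P * M.map (eval q)).rank :=
        Matrix.rank_mul_eq_left_of_isUnit_det Q (P * M.map (eval q))
          ((Matrix.isUnit_iff_isUnit_det Q).mp hQ)
      have h2 : (P * M.map (eval q)).rank = (M.map (eval q)).rank :=
        Matrix.rank_mul_eq_right_of_isUnit_det P (M.map (eval q))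
          ((Matrix.isUnit_iff_isUnit_det P).mp hP)
      rw [h1, h2]; exact hle q
    have hia : (i : ℕ) < a := i.isLt
    have hjb : (j : ℕ) < b := j.isLt
    set ri : Fin (r + 1) → Fin a := fun t => if h : (t : ℕ) < r then ⟨t, by omega⟩ else i
      with hridef
    set ci : Fin (r + 1) → Fin b := fun t => if h : (t : ℕ) < r then ⟨t, by omega⟩ else j
      with hcidef
    set S₀ : Matrix (Fin (r+1)) (Fin (r+1)) F := E.submatrix ri ci with hS₀def
    set S₁ : Matrix (Fin (r+1)) (Fin (r+1)) F := Vp.submatrix ri ci with hS₁def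
    have hS₀ : ∀ t s : Fin (r + 1), S₀ t s = if (t:ℕ) = (s:ℕ) ∧ (t:ℕ) < r then 1 else 0 := by
      intro t s
      rw [hS₀def]
      simp only [Matrix.submatrix_apply, hE, Matrix.of_apply, hridef, hcidef]
      by_cases ht : (t:ℕ) < r <;> by_cases hs : (s:ℕ) < r
      · rw [dif_pos ht, dif_pos hs]
      · rw [dif_pos ht, dif_neg hs, if_neg (by simp; omega), if_neg (by simp; omega)]
      · rw [dif_neg ht, dif_pos hs, if_neg (by simp; omega), if_neg (by simp; omega)]
      · rw [dif_neg ht, dif_neg hs, if_neg (by simp; omega), if_neg (by simp; omega)]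
    set T : Matrix (Fin (r+1)) (Fin (r+1)) (Polynomial F) :=
      Matrix.of (fun t s => Polynomial.C (S₀ t s) + Polynomial.X * Polynomial.C (S₁ t s))
      with hT
    set qp : Polynomial F := T.det with hqp
    have hTeval : ∀ t : F, T.map (Polynomial.evalRingHom t) =
        (N.map (eval fun k => p₀ k + t * p k)).submatrix ri ci := by
      intro t
      ext u s
      simp only [Matrix.map_apply, hT, Matrix.of_apply, Matrix.submatrix_apply]
      rw [Polynomial.coe_evalRingHom]
      rw [FlandersAux.eval_linear _ (hNhom _ _)]
      have e0 : eval p₀ (N (ri u) (ci s)) = S₀ u s := by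
        rw [hS₀def, Matrix.submatrix_apply, ← hNE, Matrix.map_apply]
      have e1 : eval p (N (ri u) (ci s)) = S₁ u s := by
        rw [hS₁def, Matrix.submatrix_apply, hVp, Matrix.map_apply]
      rw [e0, e1, Polynomial.eval_add, Polynomial.eval_mul, Polynomial.eval_X,
        Polynomial.eval_C, Polynomial.eval_C]
    have hqeval : ∀ t : F, qp.eval t = 0 := by
      intro t
      have h1 := RingHom.map_det (Polynomial.evalRingHom t) T
      simp only [RingHom.mapMatrix_apply] at h1
      rw [hqp, show Polynomial.eval t T.det = (Polynomial.evalRingHom t) T.det from rfl,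
        h1, hTeval t]
      exact FlandersAux.det_submatrix_eq_zero _ (hrk _) (by omega) ri ci
    have hS₁det : S₁.det = 0 := by
      rw [hS₁def]
      exact FlandersAux.det_submatrix_eq_zero Vp (show Vp.rank ≤ r from hrk p) (by omega) ri ci
    have hdeg : qp.natDegree ≤ r := by
      have h1 : qp.natDegree ≤ r + 1 := by
        rw [hqp, hT]; exact FlandersAux.natDegree_det_lin_le S₀ S₁
      have h2 : qp.coeff (r + 1) = S₁.det := by
        rw [hqp, hT]; exact FlandersAux.coeff_det_lin S₀ S₁
      rw [hS₁det] at h2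
      refine Polynomial.natDegree_le_iff_coeff_eq_zero.mpr ?_
      intro m hm
      rcases eq_or_lt_of_le (Nat.succ_le_of_lt hm) with hm1 | hm2
      · rw [← hm1]; exact h2
      · exact Polynomial.coeff_eq_zero_of_natDegree_lt (lt_of_le_of_lt h1 hm2)
    have hq0 : qp = 0 := by
      have hcard : ((r + 1 : ℕ) : Cardinal) ≤ Cardinal.mk F := by
        have h1 : (r : Cardinal) + 1 ≤ Cardinal.mk F :=
          le_trans (Cardinal.add_one_le_succ _) (Order.succ_le_of_lt hF)
        exact le_trans (by push_cast; rfl) h1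
      obtain ⟨emb⟩ : Nonempty (Fin (r+1) ↪ F) :=
        Cardinal.lift_mk_le'.mp (by simpa using hcard)
      refine Polynomial.eq_zero_of_natDegree_lt_card_of_eval_eq_zero qp emb.injective
        (fun t => hqeval _) ?_
      rw [Fintype.card_fin]; omega
    -- fin: coefficient 1 of qp equals S₁ last last
    have hlastrow : ∀ s : Fin (r+1),
        T (Fin.last r) s = Polynomial.X * Polynomial.C (S₁ (Fin.last r) s) := by
      intro s
      rw [hT]
      simp only [Matrix.of_apply]
      have h0 : S₀ (Fin.last r) s = 0 := by
        rw [hS₀]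
        rw [if_neg (by simp [Fin.val_last])]
      rw [h0, map_zero, zero_add]
    have hminor : ∀ s : Fin (r+1),
        ((T.submatrix (Fin.last r).succAbove s.succAbove).det).coeff 0
          = (if s = Fin.last r then (1:F) else 0) := by
      intro s
      rw [Polynomial.coeff_zero_eq_eval_zero]
      have h1 := RingHom.map_det (Polynomial.evalRingHom 0) (T.submatrix (Fin.last r).succAbove s.succAbove)
      simp only [RingHom.mapMatrix_apply] at h1
      rw [show Polynomial.eval 0 (T.submatrix (Fin.last r).succAbove s.succAbove).det
        = (Polynomial.evalRingHom 0) (T.submatrix (Fin.last r).succAbove s.succAbove).det from rfl, h1]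
      have h2 : (T.submatrix (Fin.last r).succAbove s.succAbove).map
          (Polynomial.evalRingHom 0) = S₀.submatrix Fin.castSucc s.succAbove := by
        ext u w
        simp only [Matrix.map_apply, Matrix.submatrix_apply, hT, Matrix.of_apply,
          Fin.succAbove_last]
        simp
      rw [h2]
      by_cases hsl : s = Fin.last r
      · subst hsl
        rw [Fin.succAbove_last]
        have h3 : S₀.submatrix Fin.castSucc Fin.castSucc = (1 : Matrix (Fin r) (Fin r) F) := by
          ext u w
          rw [Matrix.submatrix_apply, hS₀, Matrix.one_apply]
          by_cases huw : u = w
          · subst huw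
            rw [if_pos ⟨rfl, by simp [u.isLt]⟩, if_pos rfl]
          · rw [if_neg (by simp [Fin.ext_iff] at huw ⊢; omega), if_neg huw]
        rw [h3, Matrix.det_one, if_pos rfl]
      · rw [if_neg hsl]
        have hsv : (s:ℕ) < r := by
          have h4 := s.isLt
          have h5 : (s:ℕ) ≠ r := fun hc => hsl (Fin.ext (by simp [Fin.val_last, hc]))
          omega
        have hr1 : 0 < r := by omega
        set u₀ : Fin r := ⟨r - 1, by omega⟩ with hu₀
        apply Matrix.det_eq_zero_of_column_eq_zero u₀
        intro u
        rw [Matrix.submatrix_apply, hS₀]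
        have hval : ((s.succAbove u₀ : Fin (r+1)) : ℕ) = r := by
          rw [Fin.succAbove, if_neg (by simp [Fin.lt_def, hu₀]; omega)]
          simp [Fin.val_succ, hu₀]
          omega
        rw [if_neg (by rw [hval]; simp [Fin.coe_castSucc]; omega)]
    have hco : qp.coeff 1 = S₁ (Fin.last r) (Fin.last r) := by
      have hexp := Matrix.det_succ_row T (Fin.last r)
      rw [hqp, hexp, Polynomial.finset_sum_coeff]
      have hterm : ∀ s : Fin (r+1),
          ((-1 : Polynomial F) ^ ((Fin.last r : ℕ) + (s:ℕ)) * T (Fin.last r) s *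
            (T.submatrix (Fin.last r).succAbove s.succAbove).det).coeff 1
          = (-1 : F) ^ ((Fin.last r : ℕ) + (s:ℕ)) * S₁ (Fin.last r) s *
              (if s = Fin.last r then 1 else 0) := by
        intro s
        rw [hlastrow s]
        have hre : (-1 : Polynomial F) ^ ((Fin.last r:ℕ)+(s:ℕ)) *
            (Polynomial.X * Polynomial.C (S₁ (Fin.last r) s)) *
            (T.submatrix (Fin.last r).succAbove s.succAbove).det
          = Polynomial.X * ((-1 : Polynomial F) ^ ((Fin.last r:ℕ)+(s:ℕ)) *
              Polynomial.C (S₁ (Fin.last r) s) *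
              (T.submatrix (Fin.last r).succAbove s.succAbove).det) := by ring
        rw [hre, Polynomial.coeff_X_mul]
        have hc : ((-1 : Polynomial F) ^ ((Fin.last r:ℕ)+(s:ℕ)) *
            Polynomial.C (S₁ (Fin.last r) s)) = Polynomial.C
              ((-1 : F) ^ ((Fin.last r:ℕ)+(s:ℕ)) * S₁ (Fin.last r) s) := by
          rw [map_mul, map_pow, map_neg, map_one]
        rw [hc, Polynomial.coeff_C_mul, hminor s]
      rw [Finset.sum_congr rfl fun s _ => hterm s]
      rw [Finset.sum_eq_single (Fin.last r)]
      · rw [if_pos rfl, mul_one, Fin.val_last]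
        have : (-1 : F) ^ (r + r) = 1 := Even.neg_one_pow ⟨r, rfl⟩
        rw [this, one_mul]
      · intro s _ hs
        rw [if_neg hs, mul_zero]
      · intro hmem; exact absurd (Finset.mem_univ _) hmem
    have hfin : S₁ (Fin.last r) (Fin.last r) = 0 := by
      rw [← hco, hq0, Polynomial.coeff_zero]
    have hri : ri (Fin.last r) = i := by
      rw [hridef]; simp
    have hci : ci (Fin.last r) = j := by
      rw [hcidef]; simp
    rw [hS₁def, Matrix.submatrix_apply, hri, hci, hVp, Matrix.map_apply] at hfin
    exact hfin
  exact FlandersAux.linear_eq_zero _ (hNhom i j) hzero
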